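/- Let A be a finite index set, let i ∉ A, let H ⊆ A, and let r_i > 0 and r_j > 0 for all j ∈ A be positive reals. Then the alternating sum Σ_{φ ⊆ A∖H} (−1)^{|φ|} · r_i / ( r_i + Σ_{j ∈ H} r_j + Σ_{p ∈ φ} r_p ) lies in the closed interval [0, 1]. -/

import Mathlib

open Finset MeasureTheory Set Real

lemma integral_exp_neg_mul_Ioi_zero {c : ℝ} (hc : 0 < c) :
    (∫ t in Set.Ioi (0:ℝ), Real.exp (-(c * t))) = 1 / c := by
  have := MeasureTheory.integral_comp_mul_left_Ioi (fun x => Real.exp (-x)) 0 hc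
  simp only [mul_zero] at this
  rw [this, integral_exp_neg_Ioi, neg_zero, Real.exp_zero, smul_eq_mul, mul_one,
    one_div]

/-- Each inner alternating sum of the ONETS regret upper bound (Eq. (7)) — the
probability that exactly the variables indexed by `H` exceed the one indexed by
`i` — lies in `[0, 1]`. -/
theorem alternating_sum_mem_unitInterval
    {ι : Type*} [DecidableEq ι] (A : Finset ι) (i : ι) (hi : i ∉ A)
    (H : Finset ι) (hH : H ⊆ A)
    (r : ι → ℝ) (hri : 0 < r i) (hr : ∀ j ∈ A, 0 < r j) :
    (∑ φ ∈ (A \ H).powerset,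
        (-1 : ℝ) ^ φ.card * r i / (r i + ∑ j ∈ H, r j + ∑ p ∈ φ, r p))
      ∈ Set.Icc (0 : ℝ) 1 := by
  set B := A \ H with hB
  set s := r i + ∑ j ∈ H, r j with hs
  have hsH : (0:ℝ) ≤ ∑ j ∈ H, r j := Finset.sum_nonneg fun j hj => (hr j (hH hj)).le
  have hs0 : 0 < s := by positivity
  have hsi : r i ≤ s := by linarith
  have hc : ∀ φ ∈ B.powerset, 0 < s + ∑ p ∈ φ, r p := by
    intro φ hφ
    have : (0:ℝ) ≤ ∑ p ∈ φ, r p :=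
      Finset.sum_nonneg fun p hp =>
        (hr p ((Finset.sdiff_subset) ((Finset.mem_powerset.mp hφ) hp))).le
    linarith
  -- rewrite each term as an integral
  have hterm : ∀ φ ∈ B.powerset,
      (-1 : ℝ) ^ φ.card * r i / (s + ∑ p ∈ φ, r p)
        = ∫ t in Set.Ioi (0:ℝ),
            (-1 : ℝ) ^ φ.card * r i * Real.exp (-((s + ∑ p ∈ φ, r p) * t)) := by
    intro φ hφ
    rw [MeasureTheory.integral_const_mul, integral_exp_neg_mul_Ioi_zero (hc φ hφ)]
    ring
  have hint : ∀ φ ∈ B.powerset,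
      IntegrableOn (fun t => (-1 : ℝ) ^ φ.card * r i
        * Real.exp (-((s + ∑ p ∈ φ, r p) * t))) (Set.Ioi (0:ℝ)) := by
    intro φ hφ
    simpa only [neg_mul, IntegrableOn] using (exp_neg_integrableOn_Ioi 0 (hc φ hφ)).const_mul _
  rw [Finset.sum_congr rfl hterm, ← MeasureTheory.integral_finset_sum _ hint]
  -- identify the integrand with a product form
  have hprod : ∀ t : ℝ,
      (∑ φ ∈ B.powerset, (-1 : ℝ) ^ φ.card * r i * Real.exp (-((s + ∑ p ∈ φ, r p) * t)))
        = r i * Real.exp (-(s * t)) * ∏ p ∈ B, (1 - Real.exp (-(r p * t))) := by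
    intro t
    have key := Finset.prod_add (fun p => -Real.exp (-(r p * t))) (fun _ => (1:ℝ)) B
    have h2 : ∏ p ∈ B, (1 - Real.exp (-(r p * t)))
        = ∑ φ ∈ B.powerset, (-1:ℝ) ^ φ.card * ∏ p ∈ φ, Real.exp (-(r p * t)) := by
      rw [show (fun p => (1:ℝ) - Real.exp (-(r p * t)))
          = fun p => -Real.exp (-(r p * t)) + 1 by funext p; ring] at *
      rw [key]
      refine Finset.sum_congr rfl fun φ hφ => ?_
      rw [Finset.prod_const_one, mul_one]
      calc (∏ p ∈ φ, -Real.exp (-(r p * t)))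
          = ∏ p ∈ φ, ((-1) * Real.exp (-(r p * t))) :=
            Finset.prod_congr rfl fun p _ => (neg_one_mul _).symm
        _ = (-1:ℝ) ^ φ.card * ∏ p ∈ φ, Real.exp (-(r p * t)) := by
            rw [Finset.prod_mul_distrib, Finset.prod_const]
    rw [h2, Finset.mul_sum]
    refine Finset.sum_congr rfl fun φ hφ => ?_
    have hx : Real.exp (-((s + ∑ p ∈ φ, r p) * t))
        = Real.exp (-(s * t)) * ∏ p ∈ φ, Real.exp (-(r p * t)) := by
      rw [← Real.exp_sum, ← Real.exp_add]
      congr 1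
      rw [add_mul, neg_add]
      congr 1
      rw [Finset.sum_mul, ← Finset.sum_neg_distrib]
    rw [hx]; ring
  have hint2 : IntegrableOn (fun t => r i * Real.exp (-(r i * t))) (Set.Ioi (0:ℝ)) := by
    simpa only [neg_mul, IntegrableOn] using (exp_neg_integrableOn_Ioi 0 hri).const_mul _
  have hFint : IntegrableOn (fun t => ∑ φ ∈ B.powerset,
      (-1 : ℝ) ^ φ.card * r i * Real.exp (-((s + ∑ p ∈ φ, r p) * t)))
      (Set.Ioi (0:ℝ)) := integrable_finset_sum _ hint
  have hfac : ∀ (t : ℝ), 0 ≤ t → ∀ p ∈ B,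
      (0:ℝ) ≤ 1 - Real.exp (-(r p * t)) ∧ 1 - Real.exp (-(r p * t)) ≤ 1 := by
    intro t ht p hp
    have hrp : 0 < r p := hr p (Finset.sdiff_subset hp)
    have h1 : Real.exp (-(r p * t)) ≤ 1 := by
      rw [Real.exp_le_one_iff]
      nlinarith
    have h2 : 0 < Real.exp (-(r p * t)) := Real.exp_pos _
    constructor <;> linarith
  constructor
  · refine MeasureTheory.setIntegral_nonneg measurableSet_Ioi fun t ht => ?_
    rw [hprod t]
    have := hfac t (le_of_lt ht)
    have hp0 : (0:ℝ) ≤ ∏ p ∈ B, (1 - Real.exp (-(r p * t))) :=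
      Finset.prod_nonneg fun p hp => (this p hp).1
    positivity
  · have hone : (∫ t in Set.Ioi (0:ℝ), r i * Real.exp (-(r i * t))) = 1 := by
      rw [MeasureTheory.integral_const_mul, integral_exp_neg_mul_Ioi_zero hri]
      field_simp
    refine le_trans (MeasureTheory.setIntegral_mono_on hFint hint2 measurableSet_Ioi
      fun t ht => ?_) hone.le
    rw [hprod t]
    have hfc := hfac t (le_of_lt ht)
    have hp1 : ∏ p ∈ B, (1 - Real.exp (-(r p * t))) ≤ 1 :=
      Finset.prod_le_one (fun p hp => (hfc p hp).1) (fun p hp => (hfc p hp).2)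
    have hp0 : (0:ℝ) ≤ ∏ p ∈ B, (1 - Real.exp (-(r p * t))) :=
      Finset.prod_nonneg fun p hp => (hfc p hp).1
    have he : Real.exp (-(s * t)) ≤ Real.exp (-(r i * t)) := by
      apply Real.exp_le_exp.mpr
      have ht' : 0 < t := ht
      nlinarith
    have he0 : 0 < Real.exp (-(s * t)) := Real.exp_pos _
    have hei : 0 < Real.exp (-(r i * t)) := Real.exp_pos _
    have h1 : r i * Real.exp (-(s * t)) * ∏ p ∈ B, (1 - Real.exp (-(r p * t)))
        ≤ r i * Real.exp (-(s * t)) := by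
      have := mul_le_mul_of_nonneg_left hp1 (mul_nonneg hri.le he0.le)
      rw [mul_one] at this
      exact this
    have h2 : r i * Real.exp (-(s * t)) ≤ r i * Real.exp (-(r i * t)) :=
      mul_le_mul_of_nonneg_left he hri.le
    linarith
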